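/- Let Γ be a connected vertex-transitive digraph with Property Z and G = Aut(Γ), with fibres Γ_i as above. If the pointwise stabilizer G_{(Γ_0)} is non-trivial, then G is uncountable. -/

import Mathlib

variable {V : Type*}

/-- The automorphism group of a digraph given by its arc relation `E`. -/
def autGroup (E : V → V → Prop) : Subgroup (Equiv.Perm V) where
  carrier := {g | ∀ u v : V, E u v ↔ E (g u) (g v)}
  one_mem' := by intro u v; simp
  mul_mem' := by
    intro a b ha hb u v
    simpa [Equiv.Perm.mul_apply] using (hb u v).trans (ha (b u) (b v))
  inv_mem' := by
    intro a ha u v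
    simpa using (ha (a⁻¹ u) (a⁻¹ v)).symm

/-- Connectedness of a digraph (in the underlying undirected sense). -/
def DConnected (E : V → V → Prop) : Prop :=
  ∀ u v : V, Relation.ReflTransGen (fun a b => E a b ∨ E b a) u v

/-- `f : Fin (k+1) → V` is a `k`-arc. -/
def IsKArc (E : V → V → Prop) (k : ℕ) (f : Fin (k + 1) → V) : Prop :=
  ∀ i : Fin k, E (f i.castSucc) (f i.succ)

def KArcTransitive (E : V → V → Prop) (k : ℕ) : Prop :=
  ∀ f g : Fin (k + 1) → V, IsKArc E k f → IsKArc E k g →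
    ∃ a ∈ autGroup E, ∀ i, (a : Equiv.Perm V) (f i) = g i

def HighlyArcTransitive (E : V → V → Prop) : Prop :=
  ∀ k : ℕ, KArcTransitive E k

def VertexTransitive (E : V → V → Prop) : Prop :=
  ∀ u v : V, ∃ a ∈ autGroup E, (a : Equiv.Perm V) u = v

def ArcTransitive (E : V → V → Prop) : Prop :=
  ∀ u v x y : V, E u v → E x y →
    ∃ a ∈ autGroup E, (a : Equiv.Perm V) u = x ∧ (a : Equiv.Perm V) v = y

/-- Reachability in the underlying undirected graph avoiding the vertex set `S`. -/
def ReachAvoid (E : V → V → Prop) (S : Set V) : V → V → Prop :=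
  Relation.ReflTransGen (fun a b => (E a b ∨ E b a) ∧ a ∉ S ∧ b ∉ S)

/-- `u` lies in an infinite component of the complement of `S`. -/
def InfComp (E : V → V → Prop) (S : Set V) (u : V) : Prop :=
  u ∉ S ∧ {w | ReachAvoid E S u w}.Infinite

/-- A connected digraph with exactly two ends. -/
def TwoEnded (E : V → V → Prop) : Prop :=
  DConnected E ∧
  (∀ S : Set V, S.Finite → ∀ u v w : V, InfComp E S u → InfComp E S v → InfComp E S w →
    ReachAvoid E S u v ∨ ReachAvoid E S u w ∨ ReachAvoid E S v w) ∧
  ∃ S : Set V, S.Finite ∧ ∃ u v : V, InfComp E S u ∧ InfComp E S v ∧ ¬ ReachAvoid E S u v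

/-- The stabilizer of a vertex `v` in the automorphism group. -/
def vStab (E : V → V → Prop) (v : V) : Subgroup (autGroup E) where
  carrier := {g | (g : Equiv.Perm V) v = v}
  one_mem' := rfl
  mul_mem' := by
    intro a b ha hb
    simp only [Set.mem_setOf_eq] at *
    simp [Subgroup.coe_mul, Equiv.Perm.mul_apply, ha, hb]
  inv_mem' := by
    intro a ha
    simp only [Set.mem_setOf_eq] at *
    have := congrArg (((a : Equiv.Perm V))⁻¹ : Equiv.Perm V) ha
    simpa using this.symm

def outSet (E : V → V → Prop) (v : V) : Set V := {u | E v u}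
def inSet (E : V → V → Prop) (v : V) : Set V := {u | E u v}

/-- The stabilizer of `v` acts quasi-primitively on the set `Ω`. -/
def QuasiPrimitivelyOn (E : V → V → Prop) (v : V) (Ω : Set V) : Prop :=
  (∀ u ∈ Ω, ∀ w ∈ Ω, ∃ g ∈ vStab E v, ((g : autGroup E) : Equiv.Perm V) u = w) ∧
  (∀ N : Subgroup (vStab E v), N.Normal →
    (∀ n ∈ N, ∀ u ∈ Ω, (((n : vStab E v) : autGroup E) : Equiv.Perm V) u = u) ∨
    (∀ u ∈ Ω, ∀ w ∈ Ω, ∃ n ∈ N, (((n : vStab E v) : autGroup E) : Equiv.Perm V) u = w))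

lemma mem_autGroup_iff {E : V → V → Prop} {g : Equiv.Perm V} :
    g ∈ autGroup E ↔ ∀ u v : V, E u v ↔ E (g u) (g v) := Iff.rfl

@[simp] theorem Equiv.Perm.apply_inv_self {α : Type*} (f : Equiv.Perm α) (x : α) : f (f⁻¹ x) = x :=
  Equiv.apply_symm_apply f x

@[simp] theorem Equiv.Perm.inv_apply_self {α : Type*} (f : Equiv.Perm α) (x : α) : f⁻¹ (f x) = x :=
  Equiv.symm_apply_apply f x

def prodP (hs : ℕ → Equiv.Perm V) (S : ℕ → Bool) : ℕ → Equiv.Perm V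
  | 0 => 1
  | Nat.succ N => (if S N then hs N else 1) * prodP hs S N

lemma prodP_mem {E : V → V → Prop} {hs : ℕ → Equiv.Perm V}
    (hmem : ∀ n, hs n ∈ autGroup E) (S : ℕ → Bool) (N : ℕ) :
    prodP hs S N ∈ autGroup E := by
  induction N with
  | zero => exact one_mem _
  | succ N ih =>
    refine mul_mem ?_ ih
    split
    · exact hmem N
    · exact one_mem _

lemma prodP_shift {φ : V → ℤ} {hs : ℕ → Equiv.Perm V}
    (hsh : ∀ n x, φ (hs n x) = φ x) (S : ℕ → Bool) (N : ℕ) (x : V) :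
    φ (prodP hs S N x) = φ x := by
  induction N with
  | zero => simp [prodP]
  | succ N ih =>
    simp only [prodP, Equiv.Perm.mul_apply]
    split
    · rw [hsh, ih]
    · simpa using ih

lemma prodP_stab {φ : V → ℤ} {hs : ℕ → Equiv.Perm V} {m : ℕ}
    (hsh : ∀ n x, φ (hs n x) = φ x)
    (hfix : ∀ n x, φ x ≤ (n * m : ℕ) → hs n x = x)
    (S : ℕ → Bool) {N N' : ℕ} (hNN' : N ≤ N') {x : V} (hx : φ x ≤ (N * m : ℕ)) :
    prodP hs S N' x = prodP hs S N x := by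
  induction N', hNN' using Nat.le_induction with
  | base => rfl
  | succ N' hN ih =>
    have hlev : φ (prodP hs S N' x) ≤ (N' * m : ℕ) := by
      rw [prodP_shift hsh]
      refine hx.trans ?_
      exact_mod_cast Nat.cast_le.mpr (Nat.mul_le_mul_right m hN)
    simp only [prodP, Equiv.Perm.mul_apply]
    split
    · rw [ih, hfix N' _ (by rw [ih] at hlev; exact hlev)]
    · simpa using ih

lemma prodP_congr {hs : ℕ → Equiv.Perm V} {S S' : ℕ → Bool} {N : ℕ}
    (h : ∀ k < N, S k = S' k) : prodP hs S N = prodP hs S' N := by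
  induction N with
  | zero => rfl
  | succ N ih =>
    simp only [prodP]
    rw [ih (fun k hk => h k (hk.trans (Nat.lt_succ_self N))), h N (Nat.lt_succ_self N)]

lemma toNat_mul_le {t : ℤ} {m : ℕ} (hm : 1 ≤ m) : t ≤ (t.toNat * m : ℕ) := by
  have h1 : t ≤ (t.toNat : ℤ) := Int.self_le_toNat t
  have h2 : (t.toNat : ℤ) ≤ (t.toNat * m : ℕ) :=
    Nat.cast_le.mpr (Nat.le_mul_of_pos_right _ hm)
  exact h1.trans h2

def limF (φ : V → ℤ) (hs : ℕ → Equiv.Perm V)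
    (hsh : ∀ n x, φ (hs n x) = φ x) (S : ℕ → Bool) : Equiv.Perm V where
  toFun x := prodP hs S (φ x).toNat x
  invFun x := (prodP hs S (φ x).toNat)⁻¹ x
  left_inv x := by
    simp only [prodP_shift hsh, Equiv.Perm.inv_apply_self]
  right_inv x := by
    have h : φ ((prodP hs S (φ x).toNat)⁻¹ x) = φ x := by
      conv_rhs => rw [← Equiv.Perm.apply_inv_self (prodP hs S (φ x).toNat) x]
      rw [prodP_shift hsh]
    show prodP hs S (φ ((prodP hs S (φ x).toNat)⁻¹ x)).toNat ((prodP hs S (φ x).toNat)⁻¹ x) = x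
    rw [h, Equiv.Perm.apply_inv_self]

lemma limF_eval {φ : V → ℤ} {hs : ℕ → Equiv.Perm V} {m : ℕ} (hm : 1 ≤ m)
    (hsh : ∀ n x, φ (hs n x) = φ x)
    (hfix : ∀ n x, φ x ≤ (n * m : ℕ) → hs n x = x)
    (S : ℕ → Bool) {N : ℕ} {x : V} (hx : φ x ≤ (N * m : ℕ)) :
    limF φ hs hsh S x = prodP hs S N x := by
  show prodP hs S (φ x).toNat x = prodP hs S N x
  rcases le_total (φ x).toNat N with h | h
  · exact (prodP_stab hsh hfix S h (toNat_mul_le hm)).symm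
  · exact prodP_stab hsh hfix S h hx

lemma limF_mem {E : V → V → Prop} {φ : V → ℤ} {hs : ℕ → Equiv.Perm V} {m : ℕ} (hm : 1 ≤ m)
    (hsh : ∀ n x, φ (hs n x) = φ x)
    (hfix : ∀ n x, φ x ≤ (n * m : ℕ) → hs n x = x)
    (hmem : ∀ n, hs n ∈ autGroup E) (S : ℕ → Bool) :
    limF φ hs hsh S ∈ autGroup E := by
  intro u v
  set N := max (φ u).toNat (φ v).toNat with hN
  have hu : φ u ≤ (N * m : ℕ) :=
    (toNat_mul_le hm).trans (Nat.cast_le.mpr (Nat.mul_le_mul_right m (le_max_left _ _)))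
  have hv : φ v ≤ (N * m : ℕ) :=
    (toNat_mul_le hm).trans (Nat.cast_le.mpr (Nat.mul_le_mul_right m (le_max_right _ _)))
  rw [show (limF φ hs hsh S) u = limF φ hs hsh S u from rfl]
  rw [limF_eval hm hsh hfix S hu, limF_eval hm hsh hfix S hv]
  exact prodP_mem hmem S N u v

theorem keylemma (E : V → V → Prop) (φ : V → ℤ)
    (a : Equiv.Perm V) (haG : a ∈ autGroup E) (hash : ∀ x, φ (a x) = φ x + 1)
    (h : Equiv.Perm V) (hhG : h ∈ autGroup E) (hhsh : ∀ x, φ (h x) = φ x)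
    (hfix0 : ∀ x, φ x ≤ 0 → h x = x)
    (x₀ : V) (hx₀ : 1 ≤ φ x₀) (hmv : h x₀ ≠ x₀) :
    ¬ Countable ↥(autGroup E) := by
  set m : ℕ := (φ x₀).toNat with hmdef
  have hmc : (m : ℤ) = φ x₀ := Int.toNat_of_nonneg (by omega)
  have hm1 : 1 ≤ m := by omega
  have shiftPow : ∀ (k : ℕ) (x : V), φ ((a ^ k) x) = φ x + k := by
    intro k
    induction k with
    | zero => intro x; simp
    | succ k ih =>
      intro x
      have : (a ^ (k + 1)) x = (a ^ k) (a x) := by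
        rw [pow_succ]; rfl
      rw [this, ih, hash]; push_cast; ring
  have shiftPowInv : ∀ (k : ℕ) (x : V), φ ((a ^ k)⁻¹ x) = φ x - k := by
    intro k x
    have := shiftPow k ((a ^ k)⁻¹ x)
    rw [Equiv.Perm.apply_inv_self] at this
    omega
  set hs : ℕ → Equiv.Perm V := fun n => a ^ (n * m) * h * (a ^ (n * m))⁻¹ with hsdef
  have hsapp : ∀ n x, hs n x = (a ^ (n * m)) (h ((a ^ (n * m))⁻¹ x)) := fun n x => rfl
  have hssh : ∀ n x, φ (hs n x) = φ x := by
    intro n x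
    rw [hsapp, shiftPow, hhsh, shiftPowInv]; ring
  have hsfix : ∀ n x, φ x ≤ (n * m : ℕ) → hs n x = x := by
    intro n x hx
    have : φ ((a ^ (n * m))⁻¹ x) ≤ 0 := by rw [shiftPowInv]; omega
    rw [hsapp, hfix0 _ this, Equiv.Perm.apply_inv_self]
  have hsmem : ∀ n, hs n ∈ autGroup E := by
    intro n
    exact mul_mem (mul_mem (pow_mem haG _) hhG) (inv_mem (pow_mem haG _))
  set xn : ℕ → V := fun n => (a ^ (n * m)) x₀ with hxndef
  have hxnlev : ∀ n, φ (xn n) = ((n + 1) * m : ℕ) := by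
    intro n
    show φ ((a ^ (n * m)) x₀) = ((n + 1) * m : ℕ)
    rw [shiftPow]; push_cast; rw [← hmc]; ring
  have hsmv : ∀ n, hs n (xn n) ≠ xn n := by
    intro n hcon
    rw [hsapp] at hcon
    simp only [hxndef, Equiv.Perm.inv_apply_self] at hcon
    exact hmv ((a ^ (n * m)).injective hcon)
  -- the injection
  classical
  have hinj : ∀ S S' : ℕ → Bool, limF φ hs hssh S = limF φ hs hssh S' → S = S' := by
    intro S S' hST
    by_contra hne
    have hex : ∃ k, S k ≠ S' k := by
      by_contra hc
      push_neg at hc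
      exact hne (funext hc)
    set n := Nat.find hex with hndef
    have hSn : S n ≠ S' n := Nat.find_spec hex
    have hmin : ∀ k < n, S k = S' k := by
      intro k hk
      by_contra hc
      have h1 : n ≤ k := Nat.find_le hc
      omega
    set Q := prodP hs S n with hQdef
    have hQ' : prodP hs S' n = Q := (prodP_congr hmin).symm
    set z : V := Q⁻¹ (xn n) with hzdef
    have hzlev : φ z = ((n + 1) * m : ℕ) := by
      have h1 : φ (Q (Q⁻¹ (xn n))) = φ (Q⁻¹ (xn n)) := prodP_shift hssh S n _
      rw [Equiv.Perm.apply_inv_self] at h1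
      rw [hzdef, ← h1, hxnlev]
    have hzle : φ z ≤ ((n + 1) * m : ℕ) := le_of_eq hzlev
    have e1 : limF φ hs hssh S z = (if S n then hs n else 1) (xn n) := by
      rw [limF_eval hm1 hssh hsfix S hzle]
      show ((if S n then hs n else 1) * prodP hs S n) z = _
      rw [Equiv.Perm.mul_apply]
      rw [hzdef, Equiv.Perm.apply_inv_self]
    have e2 : limF φ hs hssh S' z = (if S' n then hs n else 1) (xn n) := by
      rw [limF_eval hm1 hssh hsfix S' hzle]
      show ((if S' n then hs n else 1) * prodP hs S' n) z = _
      rw [Equiv.Perm.mul_apply, hQ']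
      rw [hzdef, Equiv.Perm.apply_inv_self]
    have e3 : (if S n then hs n else 1) (xn n) = (if S' n then hs n else 1) (xn n) := by
      rw [← e1, ← e2, hST]
    apply hsmv n
    rcases Bool.eq_false_or_eq_true (S n) with hb | hb <;>
      rcases Bool.eq_false_or_eq_true (S' n) with hb' | hb'
    · exact absurd (hb.trans hb'.symm) hSn
    · rw [hb, hb'] at e3; simpa using e3
    · rw [hb, hb'] at e3; simpa using e3.symm
    · exact absurd (hb.trans hb'.symm) hSn
  intro hcount
  obtain ⟨f, hf⟩ := (countable_iff_exists_injective ↥(autGroup E)).mp hcount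
  apply Function.cantor_injective
    (fun T : Set ℕ => f ⟨limF φ hs hssh (fun n => decide (n ∈ T)), limF_mem hm1 hssh hsfix hsmem _⟩)
  intro T T' hTT'
  have hST : limF φ hs hssh (fun n => decide (n ∈ T)) = limF φ hs hssh (fun n => decide (n ∈ T')) :=
    congrArg Subtype.val (hf hTT')
  have := hinj _ _ hST
  ext k
  have hk := congrFun this k
  simpa using hk

lemma shift_const {V : Type*} (E : V → V → Prop) (φ : V → ℤ)
    (hconn : DConnected E) (hhom : ∀ u v : V, E u v → φ v = φ u + 1)
    {b : Equiv.Perm V} (hb : b ∈ autGroup E) (x y : V) :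
    φ (b x) - φ x = φ (b y) - φ y := by
  have key : ∀ u v : V, (E u v ∨ E v u) → φ (b u) - φ u = φ (b v) - φ v := by
    intro u v huv
    rcases huv with h' | h'
    · have h1 := hhom u v h'
      have h2 := hhom (b u) (b v) ((hb u v).mp h')
      omega
    · have h1 := hhom v u h'
      have h2 := hhom (b v) (b u) ((hb v u).mp h')
      omega
  have hc := hconn x y
  induction hc with
  | refl => rfl
  | tail _ step ih => rw [ih, key _ _ step]

lemma main2 {V : Type*} (E : V → V → Prop) (φ : V → ℤ)
    (hhom : ∀ u v : V, E u v → φ v = φ u + 1)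
    (g : Equiv.Perm V) (hgG : g ∈ autGroup E) (hgfix : ∀ x, φ x = 0 → g x = x)
    (hgsh : ∀ x, φ (g x) = φ x)
    (a : Equiv.Perm V) (haG : a ∈ autGroup E) (hash : ∀ x, φ (a x) = φ x + 1)
    (x : V) (hx1 : 1 ≤ φ x) (hgx : g x ≠ x) : ¬ Countable ↥(autGroup E) := by
  classical
  have hginv : ∀ z, φ (g⁻¹ z) = φ z := by
    intro z
    have := hgsh (g⁻¹ z)
    rw [Equiv.Perm.apply_inv_self] at this
    exact this.symm
  set h : Equiv.Perm V :=
    { toFun := fun z => if 0 ≤ φ z then g z else z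
      invFun := fun z => if 0 ≤ φ z then g⁻¹ z else z
      left_inv := by
        intro z
        by_cases hz : 0 ≤ φ z
        · simp [hz, hgsh]
        · simp [hz]
      right_inv := by
        intro z
        by_cases hz : 0 ≤ φ z
        · simp [hz, hginv, -Equiv.Perm.coe_inv]
        · simp [hz] } with hhdef
  have happ : ∀ z, h z = if 0 ≤ φ z then g z else z := fun z => rfl
  have hhsh : ∀ z, φ (h z) = φ z := by
    intro z
    rw [happ]
    by_cases hz : 0 ≤ φ z <;> simp [hz, hgsh]
  have hfix0 : ∀ z, φ z ≤ 0 → h z = z := by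
    intro z hz
    rw [happ]
    by_cases hz' : 0 ≤ φ z
    · have : φ z = 0 := le_antisymm hz hz'
      simp [hz', hgfix z this]
    · simp [hz']
  have hhG : h ∈ autGroup E := by
    intro u v
    rw [happ, happ]
    by_cases hu : 0 ≤ φ u <;> by_cases hv : 0 ≤ φ v
    · simp only [hu, hv, if_true]
      exact hgG u v
    · simp only [hu, hv, if_true, if_false]
      constructor
      · intro huv
        exact absurd (hhom u v huv) (by omega)
      · intro huv
        have := hhom (g u) v huv
        rw [hgsh] at this
        omega
    · simp only [hu, hv, if_true, if_false]
      constructor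
      · intro huv
        have h1 := hhom u v huv
        have hv0 : φ v = 0 := by omega
        rw [hgfix v hv0]
        exact huv
      · intro huv
        have h1 := hhom u (g v) huv
        rw [hgsh] at h1
        have hv0 : φ v = 0 := by omega
        rwa [hgfix v hv0] at huv
    · simp only [hu, hv, if_false]
  have hmv : h x ≠ x := by
    rw [happ]
    simp only [show 0 ≤ φ x by omega, if_true]
    exact hgx
  exact keylemma E φ a haG hash h hhG hhsh hfix0 x hx1 hmv

lemma autGroup_flip {V : Type*} (E : V → V → Prop) :
    autGroup (fun u v => E v u) = autGroup E := by
  ext b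
  constructor
  · intro hb u v
    exact hb v u
  · intro hb u v
    exact hb v u

/-- If a connected vertex-transitive digraph with Property Z has a
non-trivial pointwise stabilizer of the fibre `Γ₀`, then its automorphism group is
uncountable. -/
theorem uncountable_aut_of_nontrivial_fibre_stabilizer
    {V : Type*} (E : V → V → Prop)
    (hconn : DConnected E) (hvt : VertexTransitive E)
    (φ : V → ℤ) (hsurj : Function.Surjective φ)
    (hhom : ∀ u v : V, E u v → φ v = φ u + 1)
    (hnt : ∃ g : Equiv.Perm V, g ∈ autGroup E ∧ (∀ x : V, φ x = 0 → g x = x) ∧ g ≠ 1) :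
    ¬ Countable ↥(autGroup E) := by
  classical
  obtain ⟨g, hgG, hgfix, hgne⟩ := hnt
  obtain ⟨p0, hp0⟩ := hsurj 0
  have hgsh : ∀ z, φ (g z) = φ z := by
    intro z
    have := shift_const E φ hconn hhom hgG z p0
    rw [hgfix p0 hp0] at this
    omega
  obtain ⟨p1, hp1⟩ := hsurj 1
  obtain ⟨a, haG, hap⟩ := hvt p0 p1
  have hash : ∀ z, φ (a z) = φ z + 1 := by
    intro z
    have := shift_const E φ hconn hhom haG z p0
    rw [hap, hp0, hp1] at this
    omega
  obtain ⟨x, hx⟩ : ∃ x, g x ≠ x := by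
    by_contra hc
    push_neg at hc
    exact hgne (Equiv.ext hc)
  have hxne : φ x ≠ 0 := fun h0 => hx (hgfix x h0)
  rcases lt_or_gt_of_ne hxne with hneg | hpos
  · -- mirror case : flip the digraph
    rw [← autGroup_flip E]
    have hflip : g ∈ autGroup (fun u v => E v u) := by rw [autGroup_flip]; exact hgG
    have haflip : a⁻¹ ∈ autGroup (fun u v => E v u) := by
      rw [autGroup_flip]; exact inv_mem haG
    refine main2 (fun u v => E v u) (fun z => -φ z)
      (fun u v huv => by have := hhom v u huv; show -φ v = -φ u + 1; omega)
      g hflip (fun z hz => hgfix z (by have hz' : -φ z = 0 := hz; omega))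
      (fun z => by have := hgsh z; show -φ (g z) = -φ z; omega)
      a⁻¹ haflip ?_ x (by show (1:ℤ) ≤ -φ x; omega) hx
    intro z
    have := hash (a⁻¹ z)
    rw [Equiv.Perm.apply_inv_self] at this
    show -φ (a⁻¹ z) = -φ z + 1
    omega
  · exact main2 E φ hhom g hgG hgfix hgsh a haG hash x (by omega) hx
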